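/- Let M = {1,…,m} and W = {1,…,n} be finite sets, w : M × W → [0,1], and for each i ∈ M let q_i satisfy (A1) q_i(0) = q_i(1) = 0, (A2) q_i twice differentiable on [0,1], (A3) q_i strictly concave on [0,1], with π_i(u) = q_i(u)/(1 + q_i(u)). Call x : M × W → ℝ feasible if x ≥ 0, ∑_{j∈W} x_{ij} ≤ 1 for all i, and ∑_{i∈M} x_{ij} ≤ 1 for all j; write u_i(x) = ∑_{j∈W} w_{ij} x_{ij}. Let x* be feasible and maximize ∑_i u_i(x) over feasible x, and let x̂ be feasible and maximize ∑_i π_i(u_i(x)) over feasible x; write u*_i = u_i(x*) and û_i = u_i(x̂). Then for every c > 0, letting S(c) = {i ∈ M : π_i'(û_i) > c}, one has ∑_{i∈M} u*_i ≤ (1/c)·∑_{i∈S(c)} ∑_{j∈W} π_i'(û_i)·w_{ij}·x̂_{ij} + ∑_{i∈M∖S(c)} (u*_i + û_i). -/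

import Mathlib

theorem slope_le_of_max (f : ℝ → ℝ) (d a : ℝ) (h : HasDerivAt f d a)
    (hf : ∀ t ∈ Set.Ioc a (a+1), f t ≤ f a) : d ≤ 0 := by
  have ht : Filter.Tendsto (slope f a) (nhdsWithin a (Set.Ioi a)) (nhds d) :=
    ((hasDerivAt_iff_tendsto_slope.1 h).mono_left
      (nhdsWithin_mono a (fun t ht => ne_of_gt ht)))
  refine le_of_tendsto ht ?_
  filter_upwards [Ioo_mem_nhdsGT
    (show a < a+1 by linarith)] with t ht'
  have h1 : f t - f a ≤ 0 := sub_nonpos.2 (hf t ⟨ht'.1, le_of_lt ht'.2⟩)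
  have h2 : 0 < t - a := sub_pos.2 ht'.1
  rw [slope_def_field]
  exact div_nonpos_of_nonpos_of_nonneg h1 (le_of_lt h2)

theorem slope_ge_of_min (f : ℝ → ℝ) (d a : ℝ) (h : HasDerivAt f d a)
    (hf : ∀ t ∈ Set.Ioc a (a+1), f a ≤ f t) : 0 ≤ d := by
  have := slope_le_of_max (fun t => -f t) (-d) a h.neg (by
    intro t ht; simpa using hf t ht)
  linarith


open Classical in
/-- Claim 2 from the proof of Theorem 1. With `xstar` a fair-optimal feasible matching
and `xhat` a selfish-optimal feasible matching, for every `c > 0`, letting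
`S c = {i : π_i'(uhat i) > c}`,
`∑ i, ustar i ≤ (1/c) * ∑_{i ∈ S c} ∑_j π_i'(uhat i) * w i j * xhat i j
  + ∑_{i ∉ S c} (ustar i + uhat i)`. -/
theorem claim2 {ι κ : Type*} [Fintype ι] [Fintype κ]
    (w : ι → κ → ℝ) (hw : ∀ i j, w i j ∈ Set.Icc (0:ℝ) 1)
    (q : ι → ℝ → ℝ)
    (hq0 : ∀ i, q i 0 = 0) (hq1 : ∀ i, q i 1 = 0)
    (hq2 : ∀ i, ∀ u ∈ Set.Icc (0:ℝ) 1,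
      DifferentiableAt ℝ (q i) u ∧ DifferentiableAt ℝ (deriv (q i)) u)
    (hqc : ∀ i, StrictConcaveOn ℝ (Set.Icc (0:ℝ) 1) (q i))
    (π : ι → ℝ → ℝ) (hπ : ∀ i u, π i u = q i u / (1 + q i u))
    (feasible : (ι → κ → ℝ) → Prop)
    (hfeasible : ∀ x, feasible x ↔
      (∀ i j, 0 ≤ x i j) ∧ (∀ i, ∑ j, x i j ≤ 1) ∧ (∀ j, ∑ i, x i j ≤ 1))
    (util : (ι → κ → ℝ) → ι → ℝ)
    (hutil : ∀ x i, util x i = ∑ j, w i j * x i j)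
    (xstar : ι → κ → ℝ) (hxstar_feas : feasible xstar)
    (hxstar_opt : ∀ x, feasible x → ∑ i, util x i ≤ ∑ i, util xstar i)
    (xhat : ι → κ → ℝ) (hxhat_feas : feasible xhat)
    (hxhat_opt : ∀ x, feasible x → ∑ i, π i (util x i) ≤ ∑ i, π i (util xhat i))
    (ustar uhat : ι → ℝ)
    (hustar : ∀ i, ustar i = util xstar i) (huhat : ∀ i, uhat i = util xhat i) :
    ∀ c : ℝ, 0 < c →
      ∑ i, ustar i ≤
        (1 / c) * ∑ i ∈ Finset.univ.filter (fun i => c < deriv (π i) (uhat i)),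
            ∑ j, deriv (π i) (uhat i) * w i j * xhat i j
        + ∑ i ∈ (Finset.univ.filter (fun i => c < deriv (π i) (uhat i)))ᶜ,
            (ustar i + uhat i) := by
  intro c hc
  set d : ι → ℝ := fun i => deriv (π i) (uhat i) with hd
  obtain ⟨hhat0, hhatr, hhatc⟩ := (hfeasible xhat).1 hxhat_feas
  obtain ⟨hstar0, hstarr, hstarc⟩ := (hfeasible xstar).1 hxstar_feas
  -- utility bounds from feasibility
  have hub : ∀ (x : ι → κ → ℝ), (∀ i j, 0 ≤ x i j) → (∀ i, ∑ j, x i j ≤ 1) →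
      ∀ i, util x i ∈ Set.Icc (0:ℝ) 1 := by
    intro x hx0 hxr i
    rw [hutil]
    constructor
    · exact Finset.sum_nonneg fun j _ => mul_nonneg (hw i j).1 (hx0 i j)
    · calc ∑ j, w i j * x i j ≤ ∑ j, x i j :=
            Finset.sum_le_sum fun j _ => by
              nlinarith [(hw i j).1, (hw i j).2, hx0 i j]
        _ ≤ 1 := hxr i
  have huhatm : ∀ i, uhat i ∈ Set.Icc (0:ℝ) 1 := by
    intro i; rw [huhat]; exact hub xhat hhat0 hhatr i
  have hustarm : ∀ i, ustar i ∈ Set.Icc (0:ℝ) 1 := by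
    intro i; rw [hustar]; exact hub xstar hstar0 hstarr i
  -- q nonneg on [0,1]
  have hqnn : ∀ i, ∀ u ∈ Set.Icc (0:ℝ) 1, 0 ≤ q i u := by
    intro i u hu
    have := (hqc i).concaveOn.2 (Set.left_mem_Icc.2 zero_le_one)
      (Set.right_mem_Icc.2 zero_le_one) (show (0:ℝ) ≤ 1 - u by linarith [hu.2])
      (show (0:ℝ) ≤ u from hu.1) (by ring)
    simp only [smul_eq_mul, mul_zero, mul_one, hq0, hq1] at this
    calc (0:ℝ) = (1-u) * 0 + u * 0 := by ring
      _ ≤ q i ((1-u) * 0 + u * 1) := by simpa using this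
      _ = q i u := by norm_num
  have hπfun : ∀ i, π i = fun u => q i u / (1 + q i u) := fun i => funext (hπ i)
  have hden : ∀ i, ∀ u ∈ Set.Icc (0:ℝ) 1, (1:ℝ) + q i u ≠ 0 := by
    intro i u hu
    have := hqnn i u hu; positivity
  have hπdiff : ∀ i, ∀ u ∈ Set.Icc (0:ℝ) 1, DifferentiableAt ℝ (π i) u := by
    intro i u hu
    rw [hπfun i]
    exact ((hq2 i u hu).1).div ((differentiable_const (1:ℝ)).differentiableAt.add
      (hq2 i u hu).1) (hden i u hu)
  have hπhas : ∀ i, HasDerivAt (π i) (d i) (uhat i) :=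
    fun i => (hπdiff i (uhat i) (huhatm i)).hasDerivAt
  -- First-order condition at xhat
  have foc : ∀ y, feasible y → ∑ i, d i * util y i ≤ ∑ i, d i * uhat i := by
    intro y hy
    obtain ⟨hy0, hyr, hyc⟩ := (hfeasible y).1 hy
    set g : ℝ → ℝ := fun t => ∑ i, π i (uhat i + t * (util y i - uhat i)) with hg
    have key : ∑ i, d i * (util y i - uhat i) ≤ 0 := by
      apply slope_le_of_max g _ 0 ?hder ?hle
      case hder =>
        apply HasDerivAt.fun_sum
        intro i _
        have h1 : HasDerivAt (fun t:ℝ => uhat i + t * (util y i - uhat i))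
            (util y i - uhat i) 0 := by
          simpa using ((hasDerivAt_id (0:ℝ)).mul_const (util y i - uhat i)).const_add (uhat i)
        have h0 : uhat i + (0:ℝ) * (util y i - uhat i) = uhat i := by ring
        have h2 : HasDerivAt (π i) (d i) (uhat i + (0:ℝ) * (util y i - uhat i)) := by
          rw [h0]; exact hπhas i
        exact h2.comp 0 h1
      case hle =>
        intro t ht
        set x' : ι → κ → ℝ := fun i j => xhat i j + t * (y i j - xhat i j) with hx'
        have hx'feas : feasible x' := by
          rw [hfeasible]
          refine ⟨fun i j => ?_, fun i => ?_, fun j => ?_⟩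
          · have := hhat0 i j; have := hy0 i j; simp only [hx']
            nlinarith [ht.1, ht.2]
          · have hsum : ∑ j, x' i j = (1 - t) * (∑ j, xhat i j) + t * (∑ j, y i j) := by
              rw [Finset.mul_sum, Finset.mul_sum, ← Finset.sum_add_distrib]
              exact Finset.sum_congr rfl fun j _ => by simp only [hx']; ring
            rw [hsum]
            nlinarith [hhatr i, hyr i, ht.1, ht.2]
          · have hsum : ∑ i, x' i j = (1 - t) * (∑ i, xhat i j) + t * (∑ i, y i j) := by
              rw [Finset.mul_sum, Finset.mul_sum, ← Finset.sum_add_distrib]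
              exact Finset.sum_congr rfl fun i _ => by simp only [hx']; ring
            rw [hsum]
            nlinarith [hhatc j, hyc j, ht.1, ht.2]
        have hux' : ∀ i, util x' i = uhat i + t * (util y i - uhat i) := by
          intro i
          rw [hutil, huhat, hutil, hutil, ← Finset.sum_sub_distrib,
            Finset.mul_sum, ← Finset.sum_add_distrib]
          exact Finset.sum_congr rfl fun j _ => by simp only [hx']; ring
        have hopt := hxhat_opt x' hx'feas
        have hg0 : g 0 = ∑ i, π i (util xhat i) := by
          simp [hg, huhat]
        have hgt : g t = ∑ i, π i (util x' i) := by
          simp only [hg]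
          exact (Finset.sum_congr rfl fun i _ => by rw [hux' i]).symm
        rw [hg0, hgt]; exact hopt
    have hsplit : ∑ i, d i * (util y i - uhat i)
        = ∑ i, d i * util y i - ∑ i, d i * uhat i := by
      rw [← Finset.sum_sub_distrib]
      exact Finset.sum_congr rfl fun i _ => by ring
    rw [hsplit] at key; linarith
  -- d is nonnegative
  have hdnn : ∀ i, 0 ≤ d i := by
    intro i
    rcases eq_or_lt_of_le (huhatm i).1 with h0 | hpos
    · -- uhat i = 0 : d i = deriv (q i) 0 ≥ 0
      have h01 : (0:ℝ) ∈ Set.Icc (0:ℝ) 1 := ⟨le_refl _, zero_le_one⟩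
      have hq' : HasDerivAt (q i) (deriv (q i) 0) 0 := ((hq2 i 0 h01).1).hasDerivAt
      have hqd : HasDerivAt (fun u => q i u / (1 + q i u))
          ((deriv (q i) 0 * (1 + q i 0) - q i 0 * deriv (q i) 0) / (1 + q i 0)^2) 0 :=
        hq'.div (hq'.const_add 1) (hden i 0 h01)
      have hval : (deriv (q i) 0 * (1 + q i 0) - q i 0 * deriv (q i) 0) / (1 + q i 0)^2
          = deriv (q i) 0 := by rw [hq0]; ring
      have hπd : HasDerivAt (π i) (deriv (q i) 0) 0 := by
        rw [hπfun i]; rw [hval] at hqd; exact hqd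
      have hdq : d i = deriv (q i) 0 := by
        rw [hd]; simp only [← h0]; exact hπd.deriv
      rw [hdq]
      apply slope_ge_of_min (q i) _ 0 hq'
      intro t ht
      rw [hq0]
      exact hqnn i t ⟨le_of_lt ht.1, by linarith [ht.2]⟩
    · -- uhat i > 0 : use FOC with row i zeroed out
      set y : ι → κ → ℝ := fun i' j => if i' = i then 0 else xhat i' j with hy
      have hyfeas : feasible y := by
        rw [hfeasible]
        refine ⟨fun i' j => ?_, fun i' => ?_, fun j => ?_⟩
        · simp only [hy]; split
          · exact le_refl 0
          · exact hhat0 i' j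
        · by_cases h : i' = i
          · simp [hy, h]
          · simp only [hy, if_neg h]; exact hhatr i'
        · refine le_trans ?_ (hhatc j)
          apply Finset.sum_le_sum
          intro i' _
          simp only [hy]; split
          · exact hhat0 i' j
          · exact le_refl _
      have huy : ∀ i', util y i' = if i' = i then 0 else uhat i' := by
        intro i'
        by_cases h : i' = i
        · simp [hutil, hy, h]
        · simp [hutil, hy, h, huhat]
      have hfoci := foc y hyfeas
      have hlhs : ∑ i', d i' * util y i' = ∑ i', d i' * uhat i' - d i * uhat i := by
        have h1 : ∀ i', d i' * util y i'
            = d i' * uhat i' - (if i' = i then d i' * uhat i' else 0) := by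
          intro i'
          rw [huy i']
          by_cases h : i' = i
          · simp [h]
          · simp [h]
        rw [Finset.sum_congr rfl fun i' _ => h1 i', Finset.sum_sub_distrib,
          Finset.sum_ite_eq' Finset.univ i (fun i' => d i' * uhat i')]
        simp
      rw [hlhs] at hfoci
      have hprod : 0 ≤ d i * uhat i := by linarith
      nlinarith
  -- final arithmetic
  have hinner : ∀ i, (∑ j, deriv (π i) (uhat i) * w i j * xhat i j) = d i * uhat i := by
    intro i
    have h1 : d i * uhat i = ∑ j, d i * (w i j * xhat i j) := by
      rw [huhat i, hutil, Finset.mul_sum]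
    rw [h1]
    exact Finset.sum_congr rfl fun j _ => mul_assoc (d i) (w i j) (xhat i j)
  rw [Finset.sum_congr rfl fun i _ => hinner i]
  set S := Finset.filter (fun i => c < deriv (π i) (uhat i)) Finset.univ with hS
  have hcompl : Sᶜ = Finset.filter (fun i => ¬ c < deriv (π i) (uhat i)) Finset.univ := by
    rw [hS]; ext i; simp
  have hsplit : ∀ f : ι → ℝ, ∑ i, f i = ∑ i ∈ S, f i + ∑ i ∈ Sᶜ, f i := by
    intro f; rw [hcompl, hS, Finset.sum_filter_add_sum_filter_not]
  have hfoc' : ∑ i, d i * ustar i ≤ ∑ i, d i * uhat i := by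
    have := foc xstar hxstar_feas
    simpa only [← hustar] using this
  have hA : c * ∑ i ∈ S, ustar i ≤ ∑ i ∈ S, d i * ustar i := by
    rw [Finset.mul_sum]
    apply Finset.sum_le_sum
    intro i hi
    have hci : c < d i := by
      rw [hS] at hi
      exact (Finset.mem_filter.1 hi).2
    exact mul_le_mul_of_nonneg_right (le_of_lt hci) (hustarm i).1
  have hB : ∑ i ∈ Sᶜ, (d i * uhat i - d i * ustar i) ≤ c * ∑ i ∈ Sᶜ, uhat i := by
    rw [Finset.mul_sum]
    apply Finset.sum_le_sum
    intro i hi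
    have hci : d i ≤ c := by
      rw [hcompl] at hi
      have := (Finset.mem_filter.1 hi).2
      exact le_of_not_gt this
    nlinarith [hdnn i, (hustarm i).1, (huhatm i).1]
  have e1 := hsplit (fun i => d i * ustar i)
  have e2 := hsplit (fun i => d i * uhat i)
  have e3 : ∑ i ∈ Sᶜ, (d i * uhat i - d i * ustar i)
      = ∑ i ∈ Sᶜ, d i * uhat i - ∑ i ∈ Sᶜ, d i * ustar i := Finset.sum_sub_distrib _ _
  have hchain : c * ∑ i ∈ S, ustar i
      ≤ ∑ i ∈ S, d i * uhat i + c * ∑ i ∈ Sᶜ, uhat i := by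
    linarith [hA, hB, hfoc']
  have e4 := hsplit ustar
  have e5 : ∑ i ∈ Sᶜ, (ustar i + uhat i)
      = ∑ i ∈ Sᶜ, ustar i + ∑ i ∈ Sᶜ, uhat i := Finset.sum_add_distrib
  have h7 : (1/c) * (c * ∑ i ∈ S, ustar i)
      ≤ (1/c) * (∑ i ∈ S, d i * uhat i + c * ∑ i ∈ Sᶜ, uhat i) :=
    mul_le_mul_of_nonneg_left hchain (by positivity)
  have h8 : (1/c) * (c * ∑ i ∈ S, ustar i) = ∑ i ∈ S, ustar i := by
    field_simp
  have h9 : (1/c) * (∑ i ∈ S, d i * uhat i + c * ∑ i ∈ Sᶜ, uhat i)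
      = (1/c) * ∑ i ∈ S, d i * uhat i + ∑ i ∈ Sᶜ, uhat i := by
    rw [mul_add, ← mul_assoc, show (1/c) * c = 1 by field_simp]
    ring
  rw [e4, e5]
  linarith [h7]
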